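/- For all real numbers t with 0 < t < 1 and all reals f_0 > 0, f_1 > 0, a > 0: √(f_0/a + f_1²/(4a²)) − f_1/(2a) ≥ min{ t·√(f_0/a) , (1 − t²)·f_0/f_1 }. -/

import Mathlib

/-- Parametric lower bound: for `0 < t < 1`,
`√(f₀/a + f₁²/(4a²)) − f₁/(2a) ≥ min{ t·√(f₀/a), (1 − t²)·f₀/f₁ }`. -/
theorem parametric_lower_bound
    (t f₀ f₁ a : ℝ) (ht0 : 0 < t) (ht1 : t < 1)
    (hf₀ : 0 < f₀) (hf₁ : 0 < f₁) (ha : 0 < a) :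
    min (t * Real.sqrt (f₀ / a)) ((1 - t ^ 2) * f₀ / f₁)
      ≤ Real.sqrt (f₀ / a + f₁ ^ 2 / (4 * a ^ 2)) - f₁ / (2 * a) := by
  set m := min (t * Real.sqrt (f₀ / a)) ((1 - t ^ 2) * f₀ / f₁) with hm
  have ht2 : 0 < 1 - t ^ 2 := by nlinarith
  have hsq0 : 0 ≤ Real.sqrt (f₀ / a) := Real.sqrt_nonneg _
  have hm1 : m ≤ t * Real.sqrt (f₀ / a) := min_le_left _ _
  have hm2 : m ≤ (1 - t ^ 2) * f₀ / f₁ := min_le_right _ _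
  have hm0 : 0 ≤ m := le_min (by positivity) (by positivity)
  have hsq : Real.sqrt (f₀ / a) ^ 2 = f₀ / a := Real.sq_sqrt (by positivity)
  rw [le_sub_iff_add_le]
  have h1 : m ^ 2 ≤ t ^ 2 * (f₀ / a) := by nlinarith
  have h2 : 2 * m * (f₁ / (2 * a)) ≤ (1 - t ^ 2) * (f₀ / a) := by
    have : 2 * m * (f₁ / (2 * a)) ≤ 2 * ((1 - t ^ 2) * f₀ / f₁) * (f₁ / (2 * a)) := by
      have hb : 0 < f₁ / (2 * a) := by positivity
      nlinarith
    calc 2 * m * (f₁ / (2 * a)) ≤ 2 * ((1 - t ^ 2) * f₀ / f₁) * (f₁ / (2 * a)) := this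
      _ = (1 - t ^ 2) * (f₀ / a) := by field_simp
  have hkey : (m + f₁ / (2 * a)) ^ 2 ≤ f₀ / a + f₁ ^ 2 / (4 * a ^ 2) := by
    have hb2 : (f₁ / (2 * a)) ^ 2 = f₁ ^ 2 / (4 * a ^ 2) := by field_simp; ring
    nlinarith
  calc m + f₁ / (2 * a) = Real.sqrt ((m + f₁ / (2 * a)) ^ 2) := by
        rw [Real.sqrt_sq (by positivity)]
    _ ≤ Real.sqrt (f₀ / a + f₁ ^ 2 / (4 * a ^ 2)) := Real.sqrt_le_sqrt hkey
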